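/- Hivert–Nzeutchap criterion: if ≡ is a congruence on A* compatible with restriction to alphabet intervals and with the destandardization process, then the family {P_ĉ := Σ_{σ ∈ ĉ} F_σ}, indexed by the ≡-classes ĉ of permutations, spans a Hopf subalgebra of FQSym. -/

import Mathlib

open scoped Classical

/-- Baxter adjacency relations on words over the alphabet of natural numbers. -/
def BaxterAdj (w w' : List ℕ) : Prop :=
  (∃ (a b c d : ℕ) (u v : List ℕ), a ≤ b ∧ b < c ∧ c ≤ d ∧
      w = c :: (u ++ a :: d :: (v ++ [b])) ∧ w' = c :: (u ++ d :: a :: (v ++ [b]))) ∨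
  (∃ (a b c d : ℕ) (u v : List ℕ), a < b ∧ b ≤ c ∧ c < d ∧
      w = b :: (u ++ d :: a :: (v ++ [c])) ∧ w' = b :: (u ++ a :: d :: (v ++ [c])))

/-- One rewriting step: an adjacency applied inside a word (congruence context). -/
def BaxterStep (w w' : List ℕ) : Prop :=
  ∃ (p s u v : List ℕ), BaxterAdj u v ∧ w = p ++ u ++ s ∧ w' = p ++ v ++ s

/-- The Baxter congruence: the equivalence generated by the Baxter steps. -/
def BaxterEquiv : List ℕ → List ℕ → Prop := Relation.EqvGen BaxterStep

/-- Sylvester adjacency: a c u b ≡ c a u b when a ≤ b < c. -/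
def SylvAdj (w w' : List ℕ) : Prop :=
  ∃ (a b c : ℕ) (u : List ℕ), a ≤ b ∧ b < c ∧
    w = a :: c :: (u ++ [b]) ∧ w' = c :: a :: (u ++ [b])

def SylvStep (w w' : List ℕ) : Prop :=
  ∃ (p s u v : List ℕ), SylvAdj u v ∧ w = p ++ u ++ s ∧ w' = p ++ v ++ s

def SylvEquiv : List ℕ → List ℕ → Prop := Relation.EqvGen SylvStep

/-- #-sylvester adjacency: b u a c ≡ b u c a when a < b ≤ c. -/
def SylvHAdj (w w' : List ℕ) : Prop :=
  ∃ (a b c : ℕ) (u : List ℕ), a < b ∧ b ≤ c ∧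
    w = b :: (u ++ [a, c]) ∧ w' = b :: (u ++ [c, a])

def SylvHStep (w w' : List ℕ) : Prop :=
  ∃ (p s u v : List ℕ), SylvHAdj u v ∧ w = p ++ u ++ s ∧ w' = p ++ v ++ s

def SylvHEquiv : List ℕ → List ℕ → Prop := Relation.EqvGen SylvHStep

/-- The standardized word of `u`: position `i` receives the rank of the letter `u i`
(ties broken from left to right), ranks starting at `1`. -/
def std (u : List ℕ) : List ℕ :=
  (List.range u.length).map fun i =>
    ((List.range u.length).filter fun j =>
      decide (u.getD j 0 < u.getD i 0 ∨ (u.getD j 0 = u.getD i 0 ∧ j < i))).length + 1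

/-- The maximal letter of a word. -/
def wordMax (u : List ℕ) : ℕ := u.foldr max 0

/-- The Schützenberger transformation: reverse and complement each letter w.r.t. max + 1. -/
def schutz (u : List ℕ) : List ℕ := u.reverse.map fun x => wordMax u + 1 - x

/-- Labeled binary trees. -/
inductive BT where
  | leaf : BT
  | node : BT → ℕ → BT → BT
deriving DecidableEq

/-- Leaf insertion into a left binary search tree. -/
def leafInsL : BT → ℕ → BT
  | .leaf, a => .node .leaf a .leaf
  | .node l b r, a => if a < b then .node (leafInsL l a) b r else .node l b (leafInsL r a)

/-- Leaf insertion into a right binary search tree. -/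
def leafInsR : BT → ℕ → BT
  | .leaf, a => .node .leaf a .leaf
  | .node l b r, a => if a ≤ b then .node (leafInsR l a) b r else .node l b (leafInsR r a)

/-- The lower restricted tree `T_{≤ a}` of a right binary search tree. -/
def splitLE : BT → ℕ → BT
  | .leaf, _ => .leaf
  | .node l b r, a => if b ≤ a then .node l b (splitLE r a) else splitLE l a

/-- The higher restricted tree `T_{> a}` of a right binary search tree. -/
def splitGT : BT → ℕ → BT
  | .leaf, _ => .leaf
  | .node l b r, a => if b ≤ a then splitGT r a else .node (splitGT l a) b r

/-- Root insertion into a right binary search tree. -/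
def rootIns (t : BT) (a : ℕ) : BT := .node (splitLE t a) a (splitGT t a)

/-- The left tree of the P-symbol: leaf insertions from left to right. -/
def insL (u : List ℕ) : BT := u.foldl leafInsL .leaf

/-- The right tree of the P-symbol: root insertions from left to right. -/
def insR (u : List ℕ) : BT := u.foldl rootIns .leaf

/-- The P-symbol of a word. -/
def Psymb (u : List ℕ) : BT × BT := (insL u, insR u)

/-- Unlabeled binary trees. -/
inductive UBT where
  | leaf : UBT
  | node : UBT → UBT → UBT
deriving DecidableEq

/-- The shape of a labeled binary tree. -/
def shape : BT → UBT
  | .leaf => .leaf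
  | .node l _ r => .node (shape l) (shape r)

/-- The shape of the P-symbol of a word. -/
def Pshape (u : List ℕ) : UBT × UBT := (shape (insL u), shape (insR u))

/-- Number of internal nodes. -/
def sizeU : UBT → ℕ
  | .leaf => 0
  | .node l r => sizeU l + sizeU r + 1

/-- Orientations of the leaves, from left to right: `true` means right-oriented
(the leaf is the right child of its parent); the parameter is the orientation
assigned if the tree is reduced to a leaf. -/
def loU : UBT → Bool → List Bool
  | .leaf, b => [b]
  | .node l r, _ => loU l false ++ loU r true

/-- Leaf orientations of a labeled binary tree. -/
def loB : BT → Bool → List Bool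
  | .leaf, b => [b]
  | .node l _ r, _ => loB l false ++ loB r true

/-- The canopy: orientations of the leaves except the first and the last one. -/
def canU (t : UBT) : List Bool := ((loU t false).drop 1).dropLast

/-- A pair of twin binary trees: same number of nodes and complementary canopies. -/
def IsTwin (J : UBT × UBT) : Prop :=
  sizeU J.1 = sizeU J.2 ∧ (canU J.1).length = (canU J.2).length ∧
    ∀ i < (canU J.1).length, (canU J.1).getD i false ≠ (canU J.2).getD i false

/-- `σ` is (the word of) a permutation of `{1, …, n}`. -/
def IsPerm (n : ℕ) (σ : List ℕ) : Prop := σ.Perm (List.range' 1 n)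

/-- Covering-type step of the right permutohedron (weak) order: exchange of two
adjacent letters `a < b`. -/
def PermutoStep (σ ν : List ℕ) : Prop :=
  ∃ (p s : List ℕ) (a b : ℕ), a < b ∧ σ = p ++ a :: b :: s ∧ ν = p ++ b :: a :: s

/-- The right permutohedron (weak) order. -/
def PermutoLe : List ℕ → List ℕ → Prop := Relation.ReflTransGen PermutoStep

/-- Baxter permutations: avoiding the generalized patterns 2-41-3 and 3-14-2. -/
def IsBaxterPerm (σ : List ℕ) : Prop :=
  ∀ i j k, i < j → j + 1 < k → k < σ.length →
    ¬(σ.getD (j+1) 0 < σ.getD i 0 ∧ σ.getD i 0 < σ.getD k 0 ∧ σ.getD k 0 < σ.getD j 0) ∧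
    ¬(σ.getD j 0 < σ.getD k 0 ∧ σ.getD k 0 < σ.getD i 0 ∧ σ.getD i 0 < σ.getD (j+1) 0)

/-- The free quasi-symmetric functions, modeled as finitely supported functions
on words (the fundamental basis element `F_σ` is `Finsupp.single σ 1`). -/
abbrev FQSym := List ℕ →₀ ℚ

/-- Model for `FQSym ⊗ FQSym`. -/
abbrev FQSym2 := (List ℕ × List ℕ) →₀ ℚ

/-- The list of shuffles of two words. -/
def shuffles : List ℕ → List ℕ → List (List ℕ)
  | [], v => [v]
  | u, [] => [u]
  | a :: u, b :: v =>
      (shuffles u (b :: v)).map (a :: ·) ++ (shuffles (a :: u) v).map (b :: ·)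
termination_by u v => u.length + v.length
decreasing_by all_goals (simp; try omega)

/-- The shifted shuffle of two permutations. -/
def shShuffles (σ ν : List ℕ) : List (List ℕ) := shuffles σ (ν.map (· + σ.length))

/-- The product of FQSym on the fundamental basis: shifted shuffle. -/
noncomputable def fqMul (x y : FQSym) : FQSym :=
  x.sum fun σ a => y.sum fun ν b =>
    ((shShuffles σ ν).map fun π => Finsupp.single π (a * b)).sum

/-- The coproduct of FQSym: deconcatenation followed by standardization. -/
noncomputable def fqCoprod (x : FQSym) : FQSym2 :=
  x.sum fun σ a =>
    ((List.range (σ.length + 1)).map fun i =>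
      Finsupp.single (std (σ.take i), std (σ.drop i)) a).sum

/-- The tensor product of two elements of FQSym, in the model `FQSym2`. -/
noncomputable def fqTensor (x y : FQSym) : FQSym2 :=
  x.sum fun σ a => y.sum fun ν b => Finsupp.single (σ, ν) (a * b)

/-- All permutations of `{1, …, n}` as words. -/
def permsOf (n : ℕ) : List (List ℕ) := (List.range' 1 n).permutations

/-- The basis element `P_J` of Baxter: the sum of `F_σ` over the permutations
of size `n` whose P-symbol has shape `J`. -/
noncomputable def PJ (n : ℕ) (J : UBT × UBT) : FQSym :=
  (((permsOf n).filter fun σ => decide (Pshape σ = J)).map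
    fun σ => Finsupp.single σ (1 : ℚ)).sum

/-- The sum of the `F_τ` over the permutations `τ` of size `n` that are
`E`-equivalent to `σ`. -/
noncomputable def Pclass (E : List ℕ → List ℕ → Prop) (n : ℕ) (σ : List ℕ) : FQSym :=
  (((permsOf n).filter fun τ => decide (E σ τ)).map
    fun τ => Finsupp.single τ (1 : ℚ)).sum

namespace HN

open List

lemma std_length (u : List ℕ) : (std u).length = u.length := by simp [std]

lemma map_getD_range (l : List ℕ) : (List.range l.length).map (fun j => l.getD j 0) = l := by
  apply List.ext_getElem (by simp)
  intro n h1 h2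
  simp only [List.getElem_map, List.getElem_range]
  exact List.getD_eq_getElem _ _ h2

lemma std_eq_of_comp {u v : List ℕ} (hlen : u.length = v.length)
    (h : ∀ i < u.length, ∀ j < u.length,
      (u.getD j 0 < u.getD i 0 ↔ v.getD j 0 < v.getD i 0) ∧
      (u.getD j 0 = u.getD i 0 ↔ v.getD j 0 = v.getD i 0)) : std u = std v := by
  unfold std
  rw [← hlen]
  refine List.map_congr_left ?_
  intro i hi
  rw [List.mem_range] at hi
  have h' : ((List.range u.length).filter fun j =>
      decide (u.getD j 0 < u.getD i 0 ∨ (u.getD j 0 = u.getD i 0 ∧ j < i)))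
      = ((List.range u.length).filter fun j =>
      decide (v.getD j 0 < v.getD i 0 ∨ (v.getD j 0 = v.getD i 0 ∧ j < i))) := by
    apply List.filter_congr
    intro j hj
    rw [List.mem_range] at hj
    rw [decide_eq_decide]
    rw [(h i hi j hj).1, (h i hi j hj).2]
  rw [h']

lemma std_map (u : List ℕ) (f : ℕ → ℕ)
    (hf : ∀ a ∈ u, ∀ b ∈ u, (a < b ↔ f a < f b) ∧ (a = b ↔ f a = f b)) :
    std (u.map f) = std u := by
  apply std_eq_of_comp (by simp)
  intro i hi j hj
  rw [List.length_map] at hi hj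
  rw [List.getD_eq_getElem _ _ (by simpa using hj), List.getD_eq_getElem _ _ (by simpa using hi),
      List.getD_eq_getElem _ _ hj, List.getD_eq_getElem _ _ hi]
  simp only [List.getElem_map]
  exact ⟨((hf _ (List.getElem_mem hj) _ (List.getElem_mem hi)).1).symm,
         ((hf _ (List.getElem_mem hj) _ (List.getElem_mem hi)).2).symm⟩

lemma length_filter_range (u : List ℕ) (p : ℕ → Bool) :
    ((List.range u.length).filter (fun j => p (u.getD j 0))).length = (u.filter p).length := by
  conv_rhs => rw [← map_getD_range u]
  rw [List.filter_map, List.length_map]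
  rfl

noncomputable def rk (u : List ℕ) (x : ℕ) : ℕ := (u.filter (fun y => decide (y < x))).length + 1

lemma std_nodup_eq (u : List ℕ) (hu : u.Nodup) : std u = u.map (rk u) := by
  apply List.ext_getElem (by simp [std])
  intro i h1 h2
  rw [List.length_map] at h2
  simp only [std, List.getElem_map, List.getElem_range, List.length_range] at h1 ⊢
  have : ((List.range u.length).filter fun j =>
      decide (u.getD j 0 < u.getD i 0 ∨ (u.getD j 0 = u.getD i 0 ∧ j < i)))
      = (List.range u.length).filter fun j => decide (u.getD j 0 < u[i]) := by
    apply List.filter_congr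
    intro j hj
    rw [List.mem_range] at hj
    rw [decide_eq_decide, List.getD_eq_getElem _ _ h2, List.getD_eq_getElem _ _ hj]
    constructor
    · rintro (h | ⟨he, hlt⟩)
      · exact h
      · exact absurd ((List.Nodup.getElem_inj_iff hu).mp he) (by omega)
    · exact Or.inl
  rw [this, length_filter_range u (fun y => decide (y < u[i]))]
  rfl

lemma sorted_length_filter_lt {w : List ℕ} (hw : List.Pairwise (· < ·) w) :
    ∀ {j : ℕ} (hj : j < w.length), (w.filter (fun y => decide (y < w[j]))).length = j := by
  induction w with
  | nil => intro j hj; simp at hj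
  | cons a w ih =>
    intro j hj
    rw [List.pairwise_cons] at hw
    cases j with
    | zero =>
      simp only [List.getElem_cons_zero]
      rw [List.length_eq_zero_iff]
      apply List.filter_eq_nil_iff.mpr
      intro b hb
      simp only [decide_eq_true_eq]
      rcases List.mem_cons.mp hb with rfl | hb
      · omega
      · have := hw.1 b hb; omega
    | succ j =>
      have hj' : j < w.length := by simpa using hj
      simp only [List.getElem_cons_succ]
      have ha : a < w[j] := hw.1 _ (List.getElem_mem hj')
      rw [List.filter_cons_of_pos (by simpa using ha), List.length_cons,
        ih hw.2 hj']

lemma sorted_getD_filter_lt {w : List ℕ} (hw : List.Pairwise (· < ·) w) {x : ℕ} (hx : x ∈ w) :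
    w.getD ((w.filter (fun y => decide (y < x))).length) 0 = x := by
  induction w with
  | nil => simp at hx
  | cons a w ih =>
    rw [List.pairwise_cons] at hw
    rcases List.mem_cons.mp hx with hxa | hx
    · rw [hxa]
      have h0 : (a :: w).filter (fun y => decide (y < a)) = [] := by
        apply List.filter_eq_nil_iff.mpr
        intro b hb
        simp only [decide_eq_true_eq]
        rcases List.mem_cons.mp hb with rfl | hb
        · omega
        · have := hw.1 b hb; omega
      rw [h0]; rfl
    · have ha' : a < x := hw.1 _ hx
      rw [List.filter_cons_of_pos (by simpa using ha'), List.length_cons]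
      simpa using ih hw.2 hx

end HN
namespace HN

noncomputable def sortOf (u : List ℕ) : List ℕ := u.insertionSort (· ≤ ·)

lemma sortOf_perm (u : List ℕ) : (sortOf u).Perm u := List.perm_insertionSort _ u

lemma sortOf_sorted_lt {u : List ℕ} (hu : u.Nodup) : List.Pairwise (· < ·) (sortOf u) :=
  ((List.pairwise_insertionSort _ u).and ((sortOf_perm u).nodup_iff.mpr hu)).imp (fun h => lt_of_le_of_ne h.1 h.2)

lemma sorted_range' (s n : ℕ) : List.Pairwise (· < ·) (List.range' s n) :=
  List.pairwise_lt_range' (s := s) (n := n)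

lemma sorted_getElem_lt {w : List ℕ} (hw : List.Pairwise (· < ·) w) {i j : ℕ}
    (hi : i < w.length) (hj : j < w.length) (hij : i < j) : w[i] < w[j] :=
  List.pairwise_iff_getElem.mp hw i j hi hj hij

lemma std_isPerm {u : List ℕ} (hu : u.Nodup) : (std u).Perm (List.range' 1 u.length) := by
  rw [std_nodup_eq u hu]
  have h1 : (u.map (rk u)).Perm ((sortOf u).map (rk u)) := ((sortOf_perm u).symm).map _
  refine h1.trans (List.Perm.of_eq ?_)
  have hlen : (sortOf u).length = u.length := (sortOf_perm u).length_eq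
  apply List.ext_getElem (by simp [hlen])
  intro j h1' h2'
  rw [List.length_map, hlen] at h1'
  simp only [List.getElem_map, List.getElem_range']
  have hs := sortOf_sorted_lt hu
  have hj : j < (sortOf u).length := by omega
  have : (u.filter (fun y => decide (y < (sortOf u)[j]))).length = j := by
    rw [List.Perm.length_eq (((sortOf_perm u).symm).filter _)]
    exact sorted_length_filter_lt hs hj
  simp only [rk, this]
  omega

lemma filter_lt_range'_length {n x : ℕ} (hx : x ∈ List.range' 1 n) :
    ((List.range' 1 n).filter (fun y => decide (y < x))).length = x - 1 := by
  have hx' := List.mem_range'_1.mp hx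
  have hj : x - 1 < (List.range' 1 n).length := by simp; omega
  have := sorted_length_filter_lt (sorted_range' 1 n) hj
  have he : (List.range' 1 n)[x-1] = x := by
    simp only [List.getElem_range']
    omega
  rwa [he] at this

lemma std_self {σ : List ℕ} {n : ℕ} (h : σ.Perm (List.range' 1 n)) : std σ = σ := by
  have hnd : σ.Nodup := h.nodup_iff.mpr (List.nodup_range' (s := 1) (n := n))
  rw [std_nodup_eq σ hnd]
  conv_rhs => rw [← List.map_id σ]
  apply List.map_congr_left
  intro x hx
  have hx' : x ∈ List.range' 1 n := h.mem_iff.mp hx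
  have : (σ.filter (fun y => decide (y < x))).length = x - 1 := by
    rw [List.Perm.length_eq (h.filter _)]
    exact filter_lt_range'_length hx'
  have h1 := (List.mem_range'_1.mp hx').1
  simp only [rk, this, id]
  omega

lemma reconstruct {u w : List ℕ} (hu : u.Nodup) (hw : List.Pairwise (· < ·) w)
    (hperm : u.Perm w) : (std u).map (fun r => w.getD (r-1) 0) = u := by
  rw [std_nodup_eq u hu, List.map_map]
  conv_rhs => rw [← List.map_id u]
  apply List.map_congr_left
  intro x hx
  simp only [Function.comp, rk, id]
  have e : (u.filter (fun y => decide (y < x))).length + 1 - 1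
      = (w.filter (fun y => decide (y < x))).length := by
    rw [List.Perm.length_eq (hperm.filter _)]; omega
  rw [e]
  exact sorted_getD_filter_lt hw (hperm.mem_iff.mp hx)

lemma destd_mono {w : List ℕ} (hw : List.Pairwise (· < ·) w) {a b : ℕ}
    (ha : a ∈ List.range' 1 w.length) (hb : b ∈ List.range' 1 w.length) :
    (a < b ↔ w.getD (a-1) 0 < w.getD (b-1) 0) ∧ (a = b ↔ w.getD (a-1) 0 = w.getD (b-1) 0) := by
  rw [List.mem_range'_1] at ha hb
  have ha' : a - 1 < w.length := by omega
  have hb' : b - 1 < w.length := by omega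
  rw [List.getD_eq_getElem _ _ ha', List.getD_eq_getElem _ _ hb']
  have key : ∀ i j (hi : i < w.length) (hj : j < w.length), i < j → w[i] < w[j] :=
    fun i j hi hj hij => sorted_getElem_lt hw hi hj hij
  constructor
  · constructor
    · intro hab; exact key _ _ ha' hb' (by omega)
    · intro hab
      by_contra hc
      rcases Nat.lt_or_ge b a with hba | hba
      · exact absurd (key _ _ hb' ha' (by omega)) (by omega)
      · have : a = b := by omega
        subst this; omega
  · constructor
    · intro hab; congr 1; omega
    · intro hab
      by_contra hc
      rcases Nat.lt_or_ge a b with h1 | h1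
      · exact absurd (key _ _ ha' hb' (by omega)) (by omega)
      · exact absurd (key _ _ hb' ha' (by omega)) (by omega)

lemma map_range'_getD (w : List ℕ) :
    (List.range' 1 w.length).map (fun r => w.getD (r-1) 0) = w := by
  apply List.ext_getElem (by simp)
  intro j h1 h2
  simp only [List.getElem_map, List.getElem_range']
  have e : 1 + 1 * j - 1 = j := by omega
  rw [e]
  exact List.getD_eq_getElem _ _ h2

lemma destd_std {w : List ℕ} (hw : List.Pairwise (· < ·) w) {α' : List ℕ}
    (hα : α'.Perm (List.range' 1 w.length)) :
    std (α'.map (fun r => w.getD (r-1) 0)) = α' := by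
  rw [std_map α' _ (fun a ha b hb =>
    destd_mono hw (hα.mem_iff.mp ha) (hα.mem_iff.mp hb))]
  exact std_self hα

lemma destd_perm {w : List ℕ} {α' : List ℕ}
    (hα : α'.Perm (List.range' 1 w.length)) :
    (α'.map (fun r => w.getD (r-1) 0)).Perm w := by
  have := hα.map (fun r => w.getD (r-1) 0)
  rwa [map_range'_getD w] at this

end HN
namespace HN

lemma shuffles_perm : ∀ u v w : List ℕ, w ∈ shuffles u v → w.Perm (u ++ v) := by
  intro u
  induction u with
  | nil =>
    intro v w hw
    simp only [shuffles, List.mem_singleton] at hw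
    simp [hw]
  | cons a u ihu =>
    intro v
    induction v with
    | nil =>
      intro w hw
      simp only [shuffles, List.mem_singleton] at hw
      simp [hw]
    | cons b v ihv =>
      intro w hw
      rw [shuffles] at hw
      rcases List.mem_append.mp hw with h | h
      · rcases List.mem_map.mp h with ⟨w', hw', rfl⟩
        exact (ihu (b::v) w' hw').cons a
      · rcases List.mem_map.mp h with ⟨w', hw', rfl⟩
        have := (ihv w' hw').cons b
        refine this.trans ?_
        exact (List.perm_middle).symm

lemma mem_shuffles (p : ℕ → Bool) : ∀ u v w : List ℕ,
    (∀ a ∈ u, p a = true) → (∀ b ∈ v, p b = false) →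
    (w ∈ shuffles u v ↔ w.filter p = u ∧ w.filter (fun x => !p x) = v) := by
  intro u
  induction u with
  | nil =>
    intro v w _ hv
    simp only [shuffles, List.mem_singleton]
    constructor
    · rintro rfl
      refine ⟨List.filter_eq_nil_iff.mpr (fun a ha => by simp [hv a ha]), ?_⟩
      exact List.filter_eq_self.mpr (fun a ha => by simp [hv a ha])
    · rintro ⟨h1, h2⟩
      rw [← h2]
      symm
      apply List.filter_eq_self.mpr
      intro a ha
      have := List.filter_eq_nil_iff.mp h1 a ha
      simp at this ⊢
      simp [this]
  | cons a u ihu =>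
    intro v
    induction v with
    | nil =>
      intro w hu _
      simp only [shuffles, List.mem_singleton]
      constructor
      · rintro rfl
        refine ⟨List.filter_eq_self.mpr hu, List.filter_eq_nil_iff.mpr (fun x hx => by simp [hu x hx])⟩
      · rintro ⟨h1, h2⟩
        rw [← h1]
        symm
        apply List.filter_eq_self.mpr
        intro x hx
        have := List.filter_eq_nil_iff.mp h2 x hx
        simpa using this
    | cons b v ihv =>
      intro w hu hv
      have hpa : p a = true := hu a (List.mem_cons_self)
      have hpb : p b = false := hv b (List.mem_cons_self)
      have hu' : ∀ x ∈ u, p x = true := fun x hx => hu x (List.mem_cons_of_mem a hx)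
      have hv' : ∀ x ∈ v, p x = false := fun x hx => hv x (List.mem_cons_of_mem b hx)
      rw [shuffles, List.mem_append]
      constructor
      · rintro (h | h)
        · rcases List.mem_map.mp h with ⟨w', hw', rfl⟩
          have := (ihu (b::v) w' hu' hv).mp hw'
          refine ⟨?_, ?_⟩
          · rw [List.filter_cons_of_pos hpa, this.1]
          · rw [List.filter_cons_of_neg (by simp [hpa]), this.2]
        · rcases List.mem_map.mp h with ⟨w', hw', rfl⟩
          have := (ihv w' hu hv').mp hw'
          refine ⟨?_, ?_⟩
          · rw [List.filter_cons_of_neg (by simp [hpb]), this.1]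
          · rw [List.filter_cons_of_pos (by simp [hpb]), this.2]
      · rintro ⟨h1, h2⟩
        cases w with
        | nil => simp at h1
        | cons c w' =>
          by_cases hpc : p c = true
          · rw [List.filter_cons_of_pos hpc] at h1
            rw [List.filter_cons_of_neg (by simp [hpc])] at h2
            injection h1 with hca h1'
            subst hca
            exact Or.inl (List.mem_map.mpr ⟨w', (ihu (b::v) w' hu' hv).mpr ⟨h1', h2⟩, rfl⟩)
          · rw [List.filter_cons_of_neg (by simpa using hpc)] at h1
            rw [List.filter_cons_of_pos (by simpa using hpc)] at h2
            injection h2 with hcb h2'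
            subst hcb
            exact Or.inr (List.mem_map.mpr ⟨w', (ihv w' hu hv').mpr ⟨h1, h2'⟩, rfl⟩)

lemma shuffles_nodup (p : ℕ → Bool) : ∀ u v : List ℕ,
    (∀ a ∈ u, p a = true) → (∀ b ∈ v, p b = false) → (shuffles u v).Nodup := by
  intro u
  induction u with
  | nil => intro v _ _; simp [shuffles]
  | cons a u ihu =>
    intro v
    induction v with
    | nil => intro _ _; simp [shuffles]
    | cons b v ihv =>
      intro hu hv
      have hpa : p a = true := hu a (List.mem_cons_self)
      have hpb : p b = false := hv b (List.mem_cons_self)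
      have hu' : ∀ x ∈ u, p x = true := fun x hx => hu x (List.mem_cons_of_mem a hx)
      have hv' : ∀ x ∈ v, p x = false := fun x hx => hv x (List.mem_cons_of_mem b hx)
      rw [shuffles]
      apply List.Nodup.append
      · exact (ihu (b::v) hu' hv).map (fun x y h => by injection h)
      · exact (ihv hu hv').map (fun x y h => by injection h)
      · intro x hx hy
        rcases List.mem_map.mp hx with ⟨w1, _, rfl⟩
        rcases List.mem_map.mp hy with ⟨w2, _, he⟩
        injection he with hba _
        rw [hba] at hpb
        rw [hpa] at hpb
        exact Bool.noConfusion hpb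

end HN
namespace HN

lemma list_sum_zeroM {α M : Type*} [AddCommMonoid M] (l : List α) :
    (l.map (fun _ => (0:M))).sum = 0 := by
  induction l <;> simp [*]

lemma list_sum_add {α : Type*} {M : Type*} [AddCommMonoid M] (l : List α) (f g : α → M) :
    (l.map (fun x => f x + g x)).sum = (l.map f).sum + (l.map g).sum := by
  induction l with
  | nil => simp
  | cons a l ih =>
    simp only [List.map_cons, List.sum_cons, ih]
    abel

lemma fqMul_zero_left (y : FQSym) : fqMul 0 y = 0 := by
  simp [fqMul, Finsupp.sum_zero_index]

lemma fqMul_inner_zero (σ : List ℕ) (y : FQSym) :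
    (y.sum fun ν b => ((shShuffles σ ν).map fun π => Finsupp.single π ((0:ℚ) * b)).sum) = 0 := by
  have h : ∀ ν ∈ y.support, ((shShuffles σ ν).map fun π => Finsupp.single π ((0:ℚ) * (y ν))).sum = 0 := by
    intro ν _
    simp only [zero_mul, Finsupp.single_zero]
    exact list_sum_zeroM _
  rw [Finsupp.sum, Finset.sum_congr rfl h]
  simp

lemma fqMul_add_left (x x' y : FQSym) : fqMul (x + x') y = fqMul x y + fqMul x' y := by
  unfold fqMul
  apply Finsupp.sum_add_index'
  · intro σ
    exact fqMul_inner_zero σ y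
  · intro σ a a'
    rw [← Finsupp.sum_add]
    apply Finsupp.sum_congr
    intro ν _
    rw [← list_sum_add]
    congr 1
    apply List.map_congr_left
    intro π _
    rw [← Finsupp.single_add, add_mul]

lemma fqMul_zero_right (x : FQSym) : fqMul x 0 = 0 := by
  unfold fqMul
  have h : ∀ σ ∈ x.support, (Finsupp.sum (0 : FQSym) fun ν b =>
      ((shShuffles σ ν).map fun π => Finsupp.single π ((x σ) * b)).sum) = (0:FQSym) :=
    fun σ _ => Finsupp.sum_zero_index
  exact (Finsupp.sum_congr (g2 := fun _ _ => 0) h).trans Finset.sum_const_zero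

lemma fqMul_add_right (x y y' : FQSym) : fqMul x (y + y') = fqMul x y + fqMul x y' := by
  unfold fqMul
  rw [← Finsupp.sum_add]
  apply Finsupp.sum_congr
  intro σ _
  apply Finsupp.sum_add_index'
  · intro ν
    have : ∀ π ∈ shShuffles σ ν, Finsupp.single π ((x σ) * (0:ℚ)) = 0 := by
      intro π _; simp
    rw [List.map_congr_left this]
    exact list_sum_zeroM _
  · intro ν b b'
    rw [← list_sum_add]
    congr 1
    apply List.map_congr_left
    intro π _
    rw [← Finsupp.single_add, mul_add]

lemma fqMul_single_single (σ ν : List ℕ) :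
    fqMul (Finsupp.single σ (1:ℚ)) (Finsupp.single ν (1:ℚ)) =
      ((shShuffles σ ν).map fun π => Finsupp.single π (1:ℚ)).sum := by
  unfold fqMul
  rw [Finsupp.sum_single_index (fqMul_inner_zero σ _)]
  rw [Finsupp.sum_single_index]
  · simp
  · have : ∀ π ∈ shShuffles σ ν, Finsupp.single π ((1:ℚ) * 0) = 0 := by intro π _; simp
    rw [List.map_congr_left this]
    exact list_sum_zeroM _

lemma fqTensor_zero_left (y : FQSym) : fqTensor 0 y = 0 := by
  simp [fqTensor, Finsupp.sum_zero_index]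

lemma fqTensor_add_left (x x' y : FQSym) : fqTensor (x + x') y = fqTensor x y + fqTensor x' y := by
  unfold fqTensor
  apply Finsupp.sum_add_index'
  · intro σ
    rw [Finsupp.sum_congr (g2 := fun _ _ => 0) (fun ν _ => by simp)]
    exact Finset.sum_const_zero
  · intro σ a a'
    rw [← Finsupp.sum_add]
    apply Finsupp.sum_congr
    intro ν _
    rw [← Finsupp.single_add, add_mul]

lemma fqTensor_zero_right (x : FQSym) : fqTensor x 0 = 0 := by
  unfold fqTensor
  have h : ∀ σ ∈ x.support, (Finsupp.sum (0 : FQSym) fun ν b =>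
      Finsupp.single (σ, ν) ((x σ) * b)) = (0:FQSym2) :=
    fun σ _ => Finsupp.sum_zero_index
  exact (Finsupp.sum_congr (g2 := fun _ _ => 0) h).trans Finset.sum_const_zero

lemma fqTensor_add_right (x y y' : FQSym) : fqTensor x (y + y') = fqTensor x y + fqTensor x y' := by
  unfold fqTensor
  rw [← Finsupp.sum_add]
  apply Finsupp.sum_congr
  intro σ _
  apply Finsupp.sum_add_index'
  · intro ν; simp
  · intro ν b b'
    rw [← Finsupp.single_add, mul_add]

lemma fqTensor_single_single (σ ν : List ℕ) :
    fqTensor (Finsupp.single σ (1:ℚ)) (Finsupp.single ν (1:ℚ)) = Finsupp.single (σ, ν) (1:ℚ) := by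
  unfold fqTensor
  rw [Finsupp.sum_single_index]
  · rw [Finsupp.sum_single_index] <;> simp
  · rw [Finsupp.sum_congr (g2 := fun _ _ => 0) (fun ν _ => by simp)]
    exact Finset.sum_const_zero

lemma fqCoprod_zero : fqCoprod 0 = 0 := by
  simp [fqCoprod, Finsupp.sum_zero_index]

lemma fqCoprod_add (x x' : FQSym) : fqCoprod (x + x') = fqCoprod x + fqCoprod x' := by
  unfold fqCoprod
  apply Finsupp.sum_add_index'
  · intro σ
    have : ∀ i ∈ List.range (σ.length + 1),
        Finsupp.single (std (σ.take i), std (σ.drop i)) (0:ℚ) = 0 := by intro i _; simp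
    rw [List.map_congr_left this]
    exact list_sum_zeroM _
  · intro σ a a'
    rw [← list_sum_add]
    congr 1
    apply List.map_congr_left
    intro i _
    rw [← Finsupp.single_add]

lemma fqCoprod_single (σ : List ℕ) :
    fqCoprod (Finsupp.single σ (1:ℚ)) =
      ((List.range (σ.length + 1)).map fun i =>
        Finsupp.single (std (σ.take i), std (σ.drop i)) (1:ℚ)).sum := by
  unfold fqCoprod
  rw [Finsupp.sum_single_index]
  have : ∀ i ∈ List.range (σ.length + 1),
      Finsupp.single (std (σ.take i), std (σ.drop i)) (0:ℚ) = 0 := by intro i _; simp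
  rw [List.map_congr_left this]
  exact list_sum_zeroM _

lemma fqMul_finset_sum_left {ι : Type*} (s : Finset ι) (f : ι → FQSym) (y : FQSym) :
    fqMul (∑ i ∈ s, f i) y = ∑ i ∈ s, fqMul (f i) y := by
  classical
  induction s using Finset.induction with
  | empty => simp [fqMul_zero_left]
  | insert a s h ih =>
                   rw [Finset.sum_insert h, fqMul_add_left, ih, Finset.sum_insert h]

lemma fqMul_finset_sum_right {ι : Type*} (s : Finset ι) (f : ι → FQSym) (x : FQSym) :
    fqMul x (∑ i ∈ s, f i) = ∑ i ∈ s, fqMul x (f i) := by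
  classical
  induction s using Finset.induction with
  | empty => simp [fqMul_zero_right]
  | insert a s h ih =>
                   rw [Finset.sum_insert h, fqMul_add_right, ih, Finset.sum_insert h]

lemma fqTensor_finset_sum_left {ι : Type*} (s : Finset ι) (f : ι → FQSym) (y : FQSym) :
    fqTensor (∑ i ∈ s, f i) y = ∑ i ∈ s, fqTensor (f i) y := by
  classical
  induction s using Finset.induction with
  | empty => simp [fqTensor_zero_left]
  | insert a s h ih =>
                   rw [Finset.sum_insert h, fqTensor_add_left, ih, Finset.sum_insert h]

lemma fqTensor_finset_sum_right {ι : Type*} (s : Finset ι) (f : ι → FQSym) (x : FQSym) :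
    fqTensor x (∑ i ∈ s, f i) = ∑ i ∈ s, fqTensor x (f i) := by
  classical
  induction s using Finset.induction with
  | empty => simp [fqTensor_zero_right]
  | insert a s h ih =>
                   rw [Finset.sum_insert h, fqTensor_add_right, ih, Finset.sum_insert h]

lemma fqCoprod_finset_sum {ι : Type*} (s : Finset ι) (f : ι → FQSym) :
    fqCoprod (∑ i ∈ s, f i) = ∑ i ∈ s, fqCoprod (f i) := by
  classical
  induction s using Finset.induction with
  | empty => simp [fqCoprod_zero]
  | insert a s h ih =>
                   rw [Finset.sum_insert h, fqCoprod_add, ih, Finset.sum_insert h]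

end HN
namespace HN

lemma nodup_permsOf (n : ℕ) : (permsOf n).Nodup :=
  List.nodup_permutations _ (List.nodup_range' (s := 1) (n := n))

lemma mem_permsOf {n : ℕ} {σ : List ℕ} : σ ∈ permsOf n ↔ IsPerm n σ := List.mem_permutations

noncomputable def classF (E : List ℕ → List ℕ → Prop) (n : ℕ) (σ : List ℕ) : Finset (List ℕ) :=
  ((permsOf n).filter (fun τ => decide (E σ τ))).toFinset

lemma mem_classF {E : List ℕ → List ℕ → Prop} {n : ℕ} {σ τ : List ℕ} :
    τ ∈ classF E n σ ↔ IsPerm n τ ∧ E σ τ := by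
  simp [classF, List.mem_filter, mem_permsOf]

lemma Pclass_eq (E : List ℕ → List ℕ → Prop) (n : ℕ) (σ : List ℕ) :
    Pclass E n σ = ∑ τ ∈ classF E n σ, Finsupp.single τ (1:ℚ) :=
  (List.sum_toFinset _ ((nodup_permsOf n).filter _)).symm

lemma isPerm_length {n : ℕ} {σ : List ℕ} (h : IsPerm n σ) : σ.length = n := by
  simpa using h.length_eq

lemma isPerm_nodup {n : ℕ} {σ : List ℕ} (h : IsPerm n σ) : σ.Nodup :=
  h.nodup_iff.mpr (List.nodup_range' (s := 1) (n := n))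

lemma isPerm_mem {n : ℕ} {σ : List ℕ} (h : IsPerm n σ) {a : ℕ} (ha : a ∈ σ) :
    1 ≤ a ∧ a ≤ n := by
  have := List.mem_range'_1.mp (h.mem_iff.mp ha)
  omega

lemma spanA (E : List ℕ → List ℕ → Prop) (hE : Equivalence E) (N : ℕ) :
    ∀ S : Finset (List ℕ), (∀ π ∈ S, IsPerm N π) →
    (∀ π ∈ S, ∀ τ, IsPerm N τ → E π τ → τ ∈ S) →
    (∑ π ∈ S, Finsupp.single π (1:ℚ)) ∈
      Submodule.span ℚ {x : FQSym | ∃ n σ, IsPerm n σ ∧ x = Pclass E n σ} := by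
  intro S
  induction S using Finset.strongInduction with
  | _ S ih =>
    intro hperm hsat
    rcases S.eq_empty_or_nonempty with rfl | ⟨σ, hσ⟩
    · rw [Finset.sum_empty]
      exact Submodule.zero_mem _
    · have hsub : classF E N σ ⊆ S := by
        intro τ hτ
        rw [mem_classF] at hτ
        exact hsat σ hσ τ hτ.1 hτ.2
      have hne : (classF E N σ).Nonempty := ⟨σ, mem_classF.mpr ⟨hperm σ hσ, hE.refl σ⟩⟩
      rw [← Finset.sum_sdiff hsub]
      apply Submodule.add_mem
      · apply ih (S \ classF E N σ) (Finset.sdiff_ssubset hsub hne)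
        · intro π hπ; exact hperm π (Finset.mem_sdiff.mp hπ).1
        · intro π hπ τ hτp hτe
          rw [Finset.mem_sdiff] at hπ ⊢
          refine ⟨hsat π hπ.1 τ hτp hτe, ?_⟩
          intro hc
          apply hπ.2
          rw [mem_classF] at hc ⊢
          exact ⟨hperm π hπ.1, hE.trans hc.2 (hE.symm hτe)⟩
      · rw [← Pclass_eq]
        exact Submodule.subset_span ⟨N, σ, hperm σ hσ, rfl⟩

lemma fqTensor_Pclass (E : List ℕ → List ℕ → Prop) (n m : ℕ) (σ τ : List ℕ) :
    fqTensor (Pclass E n σ) (Pclass E m τ)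
      = ∑ z ∈ (classF E n σ) ×ˢ (classF E m τ), Finsupp.single z (1:ℚ) := by
  rw [Pclass_eq, Pclass_eq, fqTensor_finset_sum_left, Finset.sum_product]
  apply Finset.sum_congr rfl
  intro a _
  rw [fqTensor_finset_sum_right]
  apply Finset.sum_congr rfl
  intro b _
  exact fqTensor_single_single a b

lemma spanA2 (E : List ℕ → List ℕ → Prop) (hE : Equivalence E) (n m : ℕ) :
    ∀ D : Finset (List ℕ × List ℕ), (∀ z ∈ D, IsPerm n z.1 ∧ IsPerm m z.2) →
    (∀ z ∈ D, ∀ α β, IsPerm n α → IsPerm m β → E z.1 α → E z.2 β → (α, β) ∈ D) →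
    (∑ z ∈ D, Finsupp.single z (1:ℚ)) ∈
      Submodule.span ℚ {z : FQSym2 | ∃ n σ m τ, IsPerm n σ ∧ IsPerm m τ ∧
        z = fqTensor (Pclass E n σ) (Pclass E m τ)} := by
  intro D
  induction D using Finset.strongInduction with
  | _ D ih =>
    intro hperm hsat
    rcases D.eq_empty_or_nonempty with rfl | ⟨z, hz⟩
    · rw [Finset.sum_empty]
      exact Submodule.zero_mem _
    · set C := (classF E n z.1) ×ˢ (classF E m z.2) with hC
      have hsub : C ⊆ D := by
        intro w hw
        rw [hC, Finset.mem_product, mem_classF, mem_classF] at hw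
        have := hsat z hz w.1 w.2 hw.1.1 hw.2.1 hw.1.2 hw.2.2
        simpa using this
      have hne : C.Nonempty := ⟨z, by
        rw [hC, Finset.mem_product, mem_classF, mem_classF]
        exact ⟨⟨(hperm z hz).1, hE.refl _⟩, ⟨(hperm z hz).2, hE.refl _⟩⟩⟩
      rw [← Finset.sum_sdiff hsub]
      apply Submodule.add_mem
      · apply ih (D \ C) (Finset.sdiff_ssubset hsub hne)
        · intro w hw; exact hperm w (Finset.mem_sdiff.mp hw).1
        · intro w hw α β hα hβ heα heβ
          rw [Finset.mem_sdiff] at hw ⊢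
          refine ⟨hsat w hw.1 α β hα hβ heα heβ, ?_⟩
          intro hc
          apply hw.2
          rw [hC, Finset.mem_product, mem_classF, mem_classF] at hc ⊢
          exact ⟨⟨(hperm w hw.1).1, hE.trans hc.1.2 (hE.symm heα)⟩,
                 ⟨(hperm w hw.1).2, hE.trans hc.2.2 (hE.symm heβ)⟩⟩
      · rw [← fqTensor_Pclass]
        exact Submodule.subset_span ⟨n, z.1, m, z.2, (hperm z hz).1, (hperm z hz).2, rfl⟩

end HN
namespace HN

lemma decide_eq_bool {q : Prop} [inst : Decidable q] {b : Bool} (h : q ↔ b = true) :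
    decide q = b := by
  cases b
  · simp only [Bool.false_eq_true, iff_false] at h
    simpa using h
  · simpa using h.mpr rfl

lemma range'_split (n m : ℕ) :
    List.range' 1 n ++ List.range' (n+1) m = List.range' 1 (n+m) := by
  have h := List.range'_append (s := 1) (m := n) (n := m) (step := 1)
  rw [one_mul, add_comm 1 n] at h
  exact h

lemma map_add_right_range' (s n k : ℕ) :
    (List.range' s n).map (fun x => x + k) = List.range' (s+k) n := by
  have h := List.map_add_range' (a := k) s n 1
  rw [show (fun x => x + k) = (fun x => k + x) from funext fun x => add_comm x k, h,
    add_comm k s]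

lemma map_sub_range' (n m : ℕ) :
    (List.range' (n+1) m).map (fun x => x - n) = List.range' 1 m := by
  apply List.ext_getElem (by simp)
  intro j h1 h2
  simp only [List.getElem_map, List.getElem_range']
  omega

lemma range'_filter_le (n m : ℕ) :
    (List.range' 1 (n+m)).filter (fun x => decide (x ≤ n)) = List.range' 1 n := by
  rw [← range'_split n m, List.filter_append]
  rw [List.filter_eq_self.mpr (fun a ha => by
    have := List.mem_range'_1.mp ha; simp; omega)]
  rw [List.filter_eq_nil_iff.mpr (fun a ha => by
    have := List.mem_range'_1.mp ha; simp; omega)]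
  simp

lemma range'_filter_gt (n m : ℕ) :
    (List.range' 1 (n+m)).filter (fun x => !decide (x ≤ n)) = List.range' (n+1) m := by
  rw [← range'_split n m, List.filter_append]
  rw [List.filter_eq_nil_iff.mpr (fun a ha => by
    have := List.mem_range'_1.mp ha; simp; omega)]
  rw [List.filter_eq_self.mpr (fun a ha => by
    have := List.mem_range'_1.mp ha; simp; omega)]
  simp

lemma std_map_sub {n : ℕ} {v : List ℕ} (hv : ∀ x ∈ v, n < x) :
    std (v.map (fun x => x - n)) = std v := by
  have h1 : (v.map (fun x => x - n)).map (fun x => x + n) = v := by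
    rw [List.map_map]
    conv_rhs => rw [← List.map_id v]
    apply List.map_congr_left
    intro x hx
    have := hv x hx
    simp only [Function.comp_apply, id_eq]
    omega
  have h2 := std_map (v.map (fun x => x - n)) (fun x => x + n)
    (fun a _ b _ => by constructor <;> omega)
  rw [h1] at h2
  exact h2.symm

section Product

variable (E : List ℕ → List ℕ → Prop)

lemma restr_le (hrestr : ∀ I : Set ℕ, (∀ a b c : ℕ, a ∈ I → c ∈ I → a ≤ b → b ≤ c → b ∈ I) →
      ∀ u v, E u v →
        E (u.filter fun x => decide (x ∈ I)) (v.filter fun x => decide (x ∈ I)))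
    (n : ℕ) {u v : List ℕ} (h : E u v) :
    E (u.filter (fun x => decide (x ≤ n))) (v.filter (fun x => decide (x ≤ n))) := by
  have hI : ∀ a b c : ℕ, a ∈ {y : ℕ | y ≤ n} → c ∈ {y : ℕ | y ≤ n} → a ≤ b → b ≤ c →
      b ∈ {y : ℕ | y ≤ n} := by
    intro a b c ha hc hab hbc
    simp only [Set.mem_setOf_eq] at *
    omega
  have := hrestr {y : ℕ | y ≤ n} hI u v h
  convert this using 2 <;>
  · funext x
    refine (decide_eq_bool (inst := Classical.propDecidable _) ?_).symm
    simp [Set.mem_setOf_eq]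

lemma restr_gt (hrestr : ∀ I : Set ℕ, (∀ a b c : ℕ, a ∈ I → c ∈ I → a ≤ b → b ≤ c → b ∈ I) →
      ∀ u v, E u v →
        E (u.filter fun x => decide (x ∈ I)) (v.filter fun x => decide (x ∈ I)))
    (n : ℕ) {u v : List ℕ} (h : E u v) :
    E (u.filter (fun x => !decide (x ≤ n))) (v.filter (fun x => !decide (x ≤ n))) := by
  have hI : ∀ a b c : ℕ, a ∈ {y : ℕ | ¬ y ≤ n} → c ∈ {y : ℕ | ¬ y ≤ n} → a ≤ b → b ≤ c →
      b ∈ {y : ℕ | ¬ y ≤ n} := by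
    intro a b c ha hc hab hbc
    simp only [Set.mem_setOf_eq] at *
    omega
  have := hrestr {y : ℕ | ¬ y ≤ n} hI u v h
  convert this using 2 <;>
  · funext x
    refine (decide_eq_bool (inst := Classical.propDecidable _) ?_).symm
    by_cases hx : x ≤ n <;> simp [Set.mem_setOf_eq, hx] <;> omega

lemma prod_mem (hE : Equivalence E)
    (hcong : ∀ u u' v v', E u u' → E v v' → E (u ++ v) (u' ++ v'))
    (hrestr : ∀ I : Set ℕ, (∀ a b c : ℕ, a ∈ I → c ∈ I → a ≤ b → b ≤ c → b ∈ I) →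
      ∀ u v, E u v →
        E (u.filter fun x => decide (x ∈ I)) (v.filter fun x => decide (x ∈ I)))
    (hdest : ∀ u v, E u v ↔ (E (std u) (std v) ∧ ∀ a, u.count a = v.count a))
    (n m : ℕ) (σ0 ν0 : List ℕ) (hσ0 : IsPerm n σ0) (hν0 : IsPerm m ν0) :
    fqMul (Pclass E n σ0) (Pclass E m ν0) ∈
      Submodule.span ℚ {x : FQSym | ∃ n σ, IsPerm n σ ∧ x = Pclass E n σ} := by
  classical
  set p : ℕ → Bool := fun x => decide (x ≤ n) with hp
  have hsepA : ∀ σ : List ℕ, IsPerm n σ → ∀ a ∈ σ, p a = true := by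
    intro σ hσ a ha
    have := isPerm_mem hσ ha
    simp [hp]; omega
  have hsepB : ∀ ν : List ℕ, IsPerm m ν → ∀ b ∈ ν.map (· + n), p b = false := by
    intro ν hν b hb
    rcases List.mem_map.mp hb with ⟨y, hy, rfl⟩
    have := isPerm_mem hν hy
    simp [hp]; omega
  have hmem : ∀ σ ν : List ℕ, IsPerm n σ → IsPerm m ν → ∀ w,
      w ∈ shShuffles σ ν ↔ (w.filter p = σ ∧ w.filter (fun x => !p x) = ν.map (· + n)) := by
    intro σ ν hσ hν w
    rw [shShuffles, isPerm_length hσ]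
    exact mem_shuffles p σ _ w (hsepA σ hσ) (hsepB ν hν)
  have hnd : ∀ σ ν : List ℕ, IsPerm n σ → IsPerm m ν → (shShuffles σ ν).Nodup := by
    intro σ ν hσ hν
    rw [shShuffles, isPerm_length hσ]
    exact shuffles_nodup p σ _ (hsepA σ hσ) (hsepB ν hν)
  have hmapν : ∀ ν : List ℕ, IsPerm m ν → (ν.map (· + n)).Perm (List.range' (n+1) m) := by
    intro ν hν
    have h1 := hν.map (fun x => x + n)
    rwa [map_add_right_range' 1 m n, add_comm 1 n] at h1
  have hwperm : ∀ σ ν : List ℕ, IsPerm n σ → IsPerm m ν → ∀ w ∈ shShuffles σ ν,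
      IsPerm (n+m) w := by
    intro σ ν hσ hν w hw
    have h1 : w.Perm (σ ++ ν.map (· + n)) := by
      rw [shShuffles, isPerm_length hσ] at hw
      exact shuffles_perm σ _ w hw
    refine h1.trans ?_
    refine (hσ.append (hmapν ν hν)).trans ?_
    rw [range'_split n m]
  set S : Finset (List ℕ) := (permsOf (n+m)).toFinset.filter
    (fun π => E σ0 (π.filter p) ∧ E ν0 ((π.filter (fun x => !p x)).map (· - n))) with hS
  have hSmem : ∀ π, π ∈ S ↔ IsPerm (n+m) π ∧ E σ0 (π.filter p) ∧
      E ν0 ((π.filter (fun x => !p x)).map (· - n)) := by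
    intro π
    rw [hS, Finset.mem_filter, List.mem_toFinset, mem_permsOf]
  have key : fqMul (Pclass E n σ0) (Pclass E m ν0) = ∑ π ∈ S, Finsupp.single π (1:ℚ) := by
    rw [Pclass_eq, Pclass_eq, fqMul_finset_sum_left]
    calc ∑ σ ∈ classF E n σ0, fqMul (Finsupp.single σ 1)
            (∑ τ ∈ classF E m ν0, Finsupp.single τ 1)
        = ∑ z ∈ (classF E n σ0) ×ˢ (classF E m ν0),
            ∑ w ∈ (shShuffles z.1 z.2).toFinset, Finsupp.single w (1:ℚ) := by
          rw [Finset.sum_product]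
          apply Finset.sum_congr rfl
          intro σ hσ
          rw [fqMul_finset_sum_right]
          apply Finset.sum_congr rfl
          intro ν hν
          rw [fqMul_single_single]
          exact (List.sum_toFinset _
            (hnd σ ν (mem_classF.mp hσ).1 (mem_classF.mp hν).1)).symm
      _ = ∑ w ∈ ((classF E n σ0) ×ˢ (classF E m ν0)).biUnion
            (fun z => (shShuffles z.1 z.2).toFinset), Finsupp.single w (1:ℚ) := by
          rw [Finset.sum_biUnion]
          intro z hz z' hz' hne
          simp only [Finset.mem_coe, Finset.mem_product] at hz hz'
          rw [Function.onFun, Finset.disjoint_left]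
          intro w hw hw'
          rw [List.mem_toFinset,
            hmem z.1 z.2 (mem_classF.mp hz.1).1 (mem_classF.mp hz.2).1] at hw
          rw [List.mem_toFinset,
            hmem z'.1 z'.2 (mem_classF.mp hz'.1).1 (mem_classF.mp hz'.2).1] at hw'
          apply hne
          have h1 : z.1 = z'.1 := by rw [← hw.1, ← hw'.1]
          have h2 : z.2.map (· + n) = z'.2.map (· + n) := by rw [← hw.2, ← hw'.2]
          have h3 : z.2 = z'.2 := by
            have : Function.Injective (fun x : ℕ => x + n) := fun a b hab => by simpa using hab
            exact List.map_injective_iff.mpr this h2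
          exact Prod.ext h1 h3
      _ = ∑ π ∈ S, Finsupp.single π (1:ℚ) := by
          apply Finset.sum_congr _ (fun _ _ => rfl)
          apply Finset.ext
          intro π
          rw [Finset.mem_biUnion, hSmem]
          constructor
          · rintro ⟨z, hz, hπ⟩
            rw [Finset.mem_product] at hz
            have hz1 := mem_classF.mp hz.1
            have hz2 := mem_classF.mp hz.2
            rw [List.mem_toFinset, hmem z.1 z.2 hz1.1 hz2.1] at hπ
            refine ⟨?_, ?_, ?_⟩
            · refine hwperm z.1 z.2 hz1.1 hz2.1 π ?_
              rw [hmem z.1 z.2 hz1.1 hz2.1]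
              exact hπ
            · rw [hπ.1]; exact hz1.2
            · rw [hπ.2, List.map_map]
              have : ((fun x => x - n) ∘ (· + n)) = id := by
                funext x; simp
              rw [this, List.map_id]
              exact hz2.2
          · rintro ⟨hπp, hπ1, hπ2⟩
            have hfp : IsPerm n (π.filter p) := by
              refine (hπp.filter p).trans ?_
              rw [hp, range'_filter_le n m]
            have hfgt : (π.filter (fun x => !p x)).Perm (List.range' (n+1) m) := by
              refine (hπp.filter _).trans ?_
              rw [hp, range'_filter_gt n m]
            have hgt : ∀ x ∈ π.filter (fun x => !p x), n < x := by
              intro x hx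
              have := (List.mem_filter.mp hx).2
              simp [hp] at this
              omega
            have hmapback : ((π.filter (fun x => !p x)).map (· - n)).map (· + n)
                = π.filter (fun x => !p x) := by
              rw [List.map_map]
              conv_rhs => rw [← List.map_id (π.filter (fun x => !p x))]
              apply List.map_congr_left
              intro x hx
              have := hgt x hx
              simp only [Function.comp_apply, id_eq]
              omega
            have hfν : IsPerm m ((π.filter (fun x => !p x)).map (· - n)) := by
              refine (hfgt.map (fun x => x - n)).trans ?_
              rw [map_sub_range' n m]
            refine ⟨(π.filter p, (π.filter (fun x => !p x)).map (· - n)), ?_, ?_⟩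
            · rw [Finset.mem_product]
              exact ⟨mem_classF.mpr ⟨hfp, hπ1⟩, mem_classF.mpr ⟨hfν, hπ2⟩⟩
            · rw [List.mem_toFinset, hmem _ _ hfp hfν]
              exact ⟨rfl, hmapback.symm⟩
  rw [key]
  apply spanA E hE (n+m) S
  · intro π hπ
    exact ((hSmem π).mp hπ).1
  · intro π hπ τ hτ hEπτ
    rw [hSmem] at hπ ⊢
    obtain ⟨hπp, hπ1, hπ2⟩ := hπ
    refine ⟨hτ, ?_, ?_⟩
    · exact hE.trans hπ1 (restr_le E hrestr n hEπτ)
    · have hvv' : E (π.filter (fun x => !p x)) (τ.filter (fun x => !p x)) :=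
        restr_gt E hrestr n hEπτ
      have hgtπ : ∀ x ∈ π.filter (fun x => !p x), n < x := by
        intro x hx
        have := (List.mem_filter.mp hx).2
        simp [hp] at this; omega
      have hgtτ : ∀ x ∈ τ.filter (fun x => !p x), n < x := by
        intro x hx
        have := (List.mem_filter.mp hx).2
        simp [hp] at this; omega
      have hmain := (hdest _ _).mp hvv'
      have hperm' : (π.filter (fun x => !p x)).Perm (τ.filter (fun x => !p x)) :=
        List.perm_iff_count.mpr hmain.2
      refine hE.trans hπ2 ?_
      rw [hdest]
      constructor
      · rw [std_map_sub hgtπ, std_map_sub hgtτ]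
        exact hmain.1
      · intro a
        exact List.Perm.count_eq (hperm'.map _) a
  done

end Product

end HN
namespace HN

lemma list_range_sum {M : Type*} [AddCommMonoid M] (k : ℕ) (f : ℕ → M) :
    ((List.range k).map f).sum = ∑ i ∈ Finset.range k, f i := by
  have h : (List.range k).toFinset = Finset.range k := by
    ext x
    simp
  rw [← h]
  exact (List.sum_toFinset f List.nodup_range).symm

lemma sortOf_sorted_le (u : List ℕ) : List.Pairwise (· ≤ ·) (sortOf u) :=
  List.pairwise_insertionSort _ u

section Coproduct

variable (E : List ℕ → List ℕ → Prop)

lemma coprod_mem (hE : Equivalence E)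
    (hcong : ∀ u u' v v', E u u' → E v v' → E (u ++ v) (u' ++ v'))
    (hdest : ∀ u v, E u v ↔ (E (std u) (std v) ∧ ∀ a, u.count a = v.count a))
    (N : ℕ) (σ0 : List ℕ) (hσ0 : IsPerm N σ0) :
    fqCoprod (Pclass E N σ0) ∈
      Submodule.span ℚ {z : FQSym2 | ∃ n σ m τ, IsPerm n σ ∧ IsPerm m τ ∧
        z = fqTensor (Pclass E n σ) (Pclass E m τ)} := by
  classical
  set C := classF E N σ0 with hC
  have hlen : ∀ π ∈ C, π.length = N := fun π hπ => isPerm_length (mem_classF.mp hπ).1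
  have key : fqCoprod (Pclass E N σ0) = ∑ i ∈ Finset.range (N+1), ∑ π ∈ C,
      Finsupp.single (std (π.take i), std (π.drop i)) (1:ℚ) := by
    rw [Pclass_eq, fqCoprod_finset_sum, ← Finset.sum_comm]
    apply Finset.sum_congr rfl
    intro π hπ
    rw [fqCoprod_single, hlen π hπ]
    exact list_range_sum _ _
  rw [key]
  apply Submodule.sum_mem
  intro i hi
  rw [Finset.mem_range] at hi
  -- group by sorted take/drop
  set k : List ℕ → List ℕ × List ℕ :=
    fun π => (sortOf (π.take i), sortOf (π.drop i)) with hk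
  rw [← Finset.sum_fiberwise_of_maps_to (g := k) (t := C.image k)
    (fun π hπ => Finset.mem_image_of_mem k hπ)]
  apply Submodule.sum_mem
  intro key hkey
  -- fiber
  set F := C.filter (fun π => k π = key) with hF
  have hinj : ∀ π ∈ F, ∀ π' ∈ F,
      ((std (π.take i), std (π.drop i)) : List ℕ × List ℕ)
        = (std (π'.take i), std (π'.drop i)) → π = π' := by
    intro π hπ π' hπ' he
    rw [hF, Finset.mem_filter] at hπ hπ'
    have hnd : π.Nodup := isPerm_nodup (mem_classF.mp hπ.1).1
    have hnd' : π'.Nodup := isPerm_nodup (mem_classF.mp hπ'.1).1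
    have hkk : k π = k π' := by rw [hπ.2, hπ'.2]
    rw [hk] at hkk
    simp only [Prod.mk.injEq] at hkk he
    have hu : π.take i = π'.take i := by
      have h1 := reconstruct (hnd.sublist (List.take_sublist i π))
        (sortOf_sorted_lt (hnd.sublist (List.take_sublist i π))) (sortOf_perm _).symm
      have h2 := reconstruct (hnd'.sublist (List.take_sublist i π'))
        (sortOf_sorted_lt (hnd'.sublist (List.take_sublist i π'))) (sortOf_perm _).symm
      rw [← h1, ← h2, he.1, hkk.1]
    have hv : π.drop i = π'.drop i := by
      have h1 := reconstruct (hnd.sublist (List.drop_sublist i π))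
        (sortOf_sorted_lt (hnd.sublist (List.drop_sublist i π))) (sortOf_perm _).symm
      have h2 := reconstruct (hnd'.sublist (List.drop_sublist i π'))
        (sortOf_sorted_lt (hnd'.sublist (List.drop_sublist i π'))) (sortOf_perm _).symm
      rw [← h1, ← h2, he.2, hkk.2]
    rw [← List.take_append_drop i π, ← List.take_append_drop i π', hu, hv]
  have himg := Finset.sum_image (f := fun z : List ℕ × List ℕ => Finsupp.single z (1:ℚ))
    (g := fun π => ((std (π.take i), std (π.drop i)) : List ℕ × List ℕ)) (s := F) hinj
  rw [← himg]
  apply spanA2 E hE i (N - i)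
  · -- all pairs are perms
    intro z hz
    rcases Finset.mem_image.mp hz with ⟨π, hπ, rfl⟩
    rw [hF, Finset.mem_filter] at hπ
    have hπC := hπ.1
    have hnd : π.Nodup := isPerm_nodup (mem_classF.mp hπC).1
    have hlenπ : π.length = N := hlen π hπC
    have h1 : (π.take i).length = i := by
      rw [List.length_take, hlenπ]
      omega
    have h2 : (π.drop i).length = N - i := by
      rw [List.length_drop, hlenπ]
    constructor
    · have := std_isPerm (hnd.sublist (List.take_sublist i π))
      rwa [h1] at this
    · have := std_isPerm (hnd.sublist (List.drop_sublist i π))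
      rwa [h2] at this
  · -- saturation
    intro z hz α β hα hβ heα heβ
    rcases Finset.mem_image.mp hz with ⟨π, hπ, hzeq⟩
    rw [hF, Finset.mem_filter] at hπ
    obtain ⟨hπC, hπk⟩ := hπ
    have hπperm := (mem_classF.mp hπC).1
    have hnd : π.Nodup := isPerm_nodup hπperm
    have hlenπ : π.length = N := hlen π hπC
    set u := π.take i with hu
    set v := π.drop i with hv
    have hndu : u.Nodup := hnd.sublist (List.take_sublist i π)
    have hndv : v.Nodup := hnd.sublist (List.drop_sublist i π)
    have hulen : u.length = i := by rw [hu, List.length_take, hlenπ]; omega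
    have hvlen : v.length = N - i := by rw [hv, List.length_drop, hlenπ]
    set w1 := sortOf u with hw1
    set w2 := sortOf v with hw2
    have hw1s : List.Pairwise (· < ·) w1 := sortOf_sorted_lt hndu
    have hw2s : List.Pairwise (· < ·) w2 := sortOf_sorted_lt hndv
    have hw1len : w1.length = i := by rw [hw1, (sortOf_perm u).length_eq, hulen]
    have hw2len : w2.length = N - i := by rw [hw2, (sortOf_perm v).length_eq, hvlen]
    have hαp : α.Perm (List.range' 1 w1.length) := by rw [hw1len]; exact hα
    have hβp : β.Perm (List.range' 1 w2.length) := by rw [hw2len]; exact hβ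
    set u' := α.map (fun r => w1.getD (r-1) 0) with hu'
    set v' := β.map (fun r => w2.getD (r-1) 0) with hv'
    have hstdu' : std u' = α := destd_std hw1s hαp
    have hstdv' : std v' = β := destd_std hw2s hβp
    have hu'w1 : u'.Perm w1 := destd_perm hαp
    have hv'w2 : v'.Perm w2 := destd_perm hβp
    have huu' : u.Perm u' := ((sortOf_perm u).symm.trans hu'w1.symm)
    have hvv' : v.Perm v' := ((sortOf_perm v).symm.trans hv'w2.symm)
    have hEuu' : E u u' := by
      rw [hdest]
      constructor
      · rw [hstdu']
        have : std u = z.1 := by rw [← hzeq]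
        rw [this]
        exact heα
      · exact fun a => huu'.count_eq a
    have hEvv' : E v v' := by
      rw [hdest]
      constructor
      · rw [hstdv']
        have : std v = z.2 := by rw [← hzeq]
        rw [this]
        exact heβ
      · exact fun a => hvv'.count_eq a
    have hππ' : E π (u' ++ v') := by
      have h0 := hcong u u' v v' hEuu' hEvv'
      rwa [hu, hv, List.take_append_drop] at h0
    have hπ'perm : IsPerm N (u' ++ v') := by
      refine ((huu'.append hvv').symm).trans ?_
      rw [hu, hv, List.take_append_drop]
      exact hπperm
    have hπ'C : (u' ++ v') ∈ C := by
      rw [hC]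
      exact mem_classF.mpr ⟨hπ'perm, hE.trans (mem_classF.mp hπC).2 hππ'⟩
    have hu'len : u'.length = i := by
      rw [hu', List.length_map, hα.length_eq, List.length_range']
    have htake : (u' ++ v').take i = u' := by
      rw [← hu'len]
      exact List.take_left
    have hdrop : (u' ++ v').drop i = v' := by
      rw [← hu'len]
      exact List.drop_left
    have hkπ' : k (u' ++ v') = key := by
      rw [← hπk, hk]
      simp only [htake, hdrop]
      have e1 : sortOf u' = sortOf u := by
        apply List.Perm.eq_of_pairwise' (sortOf_sorted_le u') (sortOf_sorted_le u)
          ((sortOf_perm u').trans (huu'.symm.trans (sortOf_perm u).symm))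
      have e2 : sortOf v' = sortOf v := by
        apply List.Perm.eq_of_pairwise' (sortOf_sorted_le v') (sortOf_sorted_le v)
          ((sortOf_perm v').trans (hvv'.symm.trans (sortOf_perm v).symm))
      rw [e1, e2]
    apply Finset.mem_image.mpr
    refine ⟨u' ++ v', ?_, ?_⟩
    · rw [hF, Finset.mem_filter]
      exact ⟨hπ'C, hkπ'⟩
    · rw [htake, hdrop, hstdu', hstdv']

end Coproduct

end HN
namespace HN

lemma fqMul_smul_left (c : ℚ) (x y : FQSym) : fqMul (c • x) y = c • fqMul x y := by
  unfold fqMul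
  rw [Finsupp.sum_smul_index' (fun σ => fqMul_inner_zero σ y), Finsupp.smul_sum]
  apply Finsupp.sum_congr
  intro σ _
  rw [Finsupp.smul_sum]
  apply Finsupp.sum_congr
  intro ν _
  rw [List.smul_sum, List.map_map]
  congr 1
  apply List.map_congr_left
  intro π _
  simp only [Function.comp_apply, Finsupp.smul_single, smul_eq_mul, mul_assoc]

lemma fqMul_smul_right (c : ℚ) (x y : FQSym) : fqMul x (c • y) = c • fqMul x y := by
  unfold fqMul
  rw [Finsupp.smul_sum]
  apply Finsupp.sum_congr
  intro σ _
  rw [Finsupp.sum_smul_index' (h := fun ν b => ((shShuffles σ ν).map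
    fun π => Finsupp.single π ((x σ) * b)).sum) (fun ν => by
      have : ∀ π ∈ shShuffles σ ν, Finsupp.single π ((x σ) * (0:ℚ)) = 0 := by intro π _; simp
      rw [List.map_congr_left this]
      exact list_sum_zeroM _), Finsupp.smul_sum]
  apply Finsupp.sum_congr
  intro ν _
  rw [List.smul_sum, List.map_map]
  congr 1
  apply List.map_congr_left
  intro π _
  simp only [Function.comp_apply, Finsupp.smul_single, smul_eq_mul]
  ring_nf

lemma fqCoprod_smul (c : ℚ) (x : FQSym) : fqCoprod (c • x) = c • fqCoprod x := by
  unfold fqCoprod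
  rw [Finsupp.sum_smul_index' (fun σ => by
    have : ∀ i ∈ List.range (σ.length + 1),
        Finsupp.single (std (σ.take i), std (σ.drop i)) (0:ℚ) = 0 := by intro i _; simp
    rw [List.map_congr_left this]
    exact list_sum_zeroM _), Finsupp.smul_sum]
  apply Finsupp.sum_congr
  intro σ _
  rw [List.smul_sum, List.map_map]
  congr 1
  apply List.map_congr_left
  intro i _
  simp only [Function.comp_apply, Finsupp.smul_single, smul_eq_mul]

end HN
/-- the Hivert–Nzeutchap criterion: a congruence compatible with
restriction to alphabet intervals and with destandardization yields, by summing
the fundamental basis over its classes of permutations, a Hopf subalgebra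
of FQSym. -/
theorem hivert_nzeutchap (E : List ℕ → List ℕ → Prop) (hE : Equivalence E)
    (hcong : ∀ u u' v v', E u u' → E v v' → E (u ++ v) (u' ++ v'))
    (hrestr : ∀ I : Set ℕ, (∀ a b c : ℕ, a ∈ I → c ∈ I → a ≤ b → b ≤ c → b ∈ I) →
      ∀ u v, E u v →
        E (u.filter fun x => decide (x ∈ I)) (v.filter fun x => decide (x ∈ I)))
    (hdest : ∀ u v, E u v ↔ (E (std u) (std v) ∧ ∀ a, u.count a = v.count a)) :
    (∀ x ∈ Submodule.span ℚ {x : FQSym | ∃ n σ, IsPerm n σ ∧ x = Pclass E n σ},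
     ∀ y ∈ Submodule.span ℚ {x : FQSym | ∃ n σ, IsPerm n σ ∧ x = Pclass E n σ},
       fqMul x y ∈ Submodule.span ℚ {x : FQSym | ∃ n σ, IsPerm n σ ∧ x = Pclass E n σ}) ∧
    (∀ x ∈ Submodule.span ℚ {x : FQSym | ∃ n σ, IsPerm n σ ∧ x = Pclass E n σ},
       fqCoprod x ∈ Submodule.span ℚ
         {z : FQSym2 | ∃ n σ m τ, IsPerm n σ ∧ IsPerm m τ ∧
            z = fqTensor (Pclass E n σ) (Pclass E m τ)}) := by
  classical
  constructor
  · intro x hx y hy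
    induction hx using Submodule.span_induction with
    | mem x hxm =>
      induction hy using Submodule.span_induction with
      | mem y hym =>
        obtain ⟨n, σ, hσ, rfl⟩ := hxm
        obtain ⟨m, ν, hν, rfl⟩ := hym
        exact HN.prod_mem E hE hcong hrestr hdest n m σ ν hσ hν
      | zero => rw [HN.fqMul_zero_right]; exact Submodule.zero_mem _
      | add y z hy1 hz1 hy' hz' => rw [HN.fqMul_add_right]; exact Submodule.add_mem _ hy' hz'
      | smul c y hy1 hy' => rw [HN.fqMul_smul_right]; exact Submodule.smul_mem _ c hy'
    | zero => rw [HN.fqMul_zero_left]; exact Submodule.zero_mem _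
    | add x z hx1 hx2 h1 h2 => rw [HN.fqMul_add_left]; exact Submodule.add_mem _ h1 h2
    | smul c x hx1 h1 => rw [HN.fqMul_smul_left]; exact Submodule.smul_mem _ c h1
  · intro x hx
    induction hx using Submodule.span_induction with
    | mem x hxm =>
      obtain ⟨n, σ, hσ, rfl⟩ := hxm
      exact HN.coprod_mem E hE hcong hdest n σ hσ
    | zero => rw [HN.fqCoprod_zero]; exact Submodule.zero_mem _
    | add x z hx1 hx2 h1 h2 => rw [HN.fqCoprod_add]; exact Submodule.add_mem _ h1 h2
    | smul c x hx1 h1 => rw [HN.fqCoprod_smul]; exact Submodule.smul_mem _ c h1
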